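/- Let λ ∈ ℝ³ be a probability vector with 0 < λ₁ ≤ λ₂ ≤ λ₃ and √λ₁ + √λ₂ ≤ √λ₃. Then the 3×3 real symmetric matrix P₂ = (1/9)·[[3λ₁ + 4√(λ₂λ₃), −3√(λ₁λ₂), −3√(λ₁λ₃)], [−3√(λ₁λ₂), 3λ₂ + 4√(λ₂λ₃), −√(λ₂λ₃)], [−3√(λ₁λ₃), −√(λ₂λ₃), 3λ₃]] is positive semidefinite. -/

import Mathlib

lemma key_quad (a b c x y z : ℝ) (ha : 0 < a) (hab : a ≤ b) (hbc : b ≤ c) :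
    0 ≤ (3*a^2+4*b*c)*x^2 + (3*b^2+4*b*c)*y^2 + 3*c^2*z^2
      - 6*a*b*x*y - 6*a*c*x*z - 2*b*c*y*z := by
  have hb : 0 < b := lt_of_lt_of_le ha hab
  have hc : 0 < c := lt_of_lt_of_le hb hbc
  have hA : 0 < 3*a^2+4*b*c := by positivity
  set A := 3*a^2+4*b*c with hAdef
  set Q := (3*a^2+4*b*c)*x^2 + (3*b^2+4*b*c)*y^2 + 3*c^2*z^2
      - 6*a*b*x*y - 6*a*c*x*z - 2*b*c*y*z with hQ
  have hac : a ≤ c := le_trans hab hbc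
  have hD : 0 ≤ 9*a^2*c^2+8*b^2*c^2+12*b*c^3-9*a^4-6*a^2*b*c := by
    have e1 : (0:ℝ) ≤ 9*a^2*(c^2-a^2) := by
      apply mul_nonneg (by positivity); nlinarith
    have e2 : (0:ℝ) ≤ 6*(b*c)*(2*c^2-a^2) := by
      apply mul_nonneg (by positivity); nlinarith
    nlinarith [e1, e2, mul_nonneg (mul_nonneg hb.le hb.le) (mul_nonneg hc.le hc.le)]
  have hid : 3*c^2*A*Q =
      3*c^2*(A*x-3*a*b*y-3*a*c*z)^2 + 4*b*c*(3*c^2*z-(3*a^2+b*c)*y)^2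
      + 4*b*c*(9*a^2*c^2+8*b^2*c^2+12*b*c^3-9*a^4-6*a^2*b*c)*y^2 := by
    simp only [hQ, hAdef]; ring
  have hpos : 0 < 3*c^2*A := by positivity
  have hprod : 0 ≤ 3*c^2*A*Q := by
    rw [hid]
    have t1 : (0:ℝ) ≤ 3*c^2*(A*x-3*a*b*y-3*a*c*z)^2 := by positivity
    have t2 : (0:ℝ) ≤ 4*b*c*(3*c^2*z-(3*a^2+b*c)*y)^2 := by positivity
    have t3 : (0:ℝ) ≤ 4*b*c*(9*a^2*c^2+8*b^2*c^2+12*b*c^3-9*a^4-6*a^2*b*c)*y^2 := by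
      have h4 : (0:ℝ) ≤ 4*b*c := by positivity
      have := mul_nonneg (mul_nonneg h4 hD) (sq_nonneg y)
      linarith [this]
    linarith
  nlinarith [hprod, hpos]

/-- The matrix `P₂` from the rank-three construction is positive
semidefinite. -/
theorem stmt2 (l1 l2 l3 : ℝ) (h1 : 0 < l1) (h12 : l1 ≤ l2) (h23 : l2 ≤ l3)
    (hsum : l1 + l2 + l3 = 1)
    (hs : Real.sqrt l1 + Real.sqrt l2 ≤ Real.sqrt l3) :
    (((1:ℝ)/9) • !![3*l1 + 4*Real.sqrt (l2*l3), -3*Real.sqrt (l1*l2), -3*Real.sqrt (l1*l3);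
       -3*Real.sqrt (l1*l2), 3*l2 + 4*Real.sqrt (l2*l3), -Real.sqrt (l2*l3);
       -3*Real.sqrt (l1*l3), -Real.sqrt (l2*l3), 3*l3]).PosSemidef := by
  have h2 : 0 < l2 := lt_of_lt_of_le h1 h12
  have h3 : 0 < l3 := lt_of_lt_of_le h2 h23
  set a := Real.sqrt l1 with hadef
  set b := Real.sqrt l2 with hbdef
  set c := Real.sqrt l3 with hcdef
  have ha : 0 < a := Real.sqrt_pos.mpr h1
  have hab : a ≤ b := Real.sqrt_le_sqrt h12
  have hbc : b ≤ c := Real.sqrt_le_sqrt h23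
  have ha2 : a^2 = l1 := Real.sq_sqrt h1.le
  have hb2 : b^2 = l2 := Real.sq_sqrt h2.le
  have hc2 : c^2 = l3 := Real.sq_sqrt h3.le
  have h12' : Real.sqrt (l1*l2) = a*b := Real.sqrt_mul h1.le l2
  have h13' : Real.sqrt (l1*l3) = a*c := Real.sqrt_mul h1.le l3
  have h23' : Real.sqrt (l2*l3) = b*c := Real.sqrt_mul h2.le l3
  rw [Matrix.posSemidef_iff_dotProduct_mulVec]
  constructor
  · rw [Matrix.IsHermitian]
    ext i j
    fin_cases i <;> fin_cases j <;>
      simp [Matrix.conjTranspose_apply, Matrix.smul_apply]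
  · intro v
    have key := key_quad a b c (v 0) (v 1) (v 2) ha hab hbc
    rw [ha2, hb2, hc2] at key
    simp only [Matrix.of_apply, dotProduct, Matrix.mulVec, Fin.sum_univ_three, Matrix.smul_apply,
      Matrix.cons_val', Matrix.cons_val_zero, Matrix.cons_val_one, Matrix.head_cons,
      Matrix.empty_val', Matrix.cons_val_fin_one, Matrix.head_fin_const,
      Matrix.cons_val_two, Matrix.tail_cons, Pi.star_apply, star_trivial,
      smul_eq_mul, h12', h13', h23', RCLike.star_def, starRingEnd_apply]
    nlinarith [key]
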